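/- arXiv:2509.02944 — 4 statements merged into one kernel-verified Lean document; each statement's English description precedes it below -/
import Mathlib

section
/- Let L ≥ 1 and let n : ZMod L → ℕ satisfy n i ≤ 2 for every i and Σ_{i ∈ ZMod L} n i = L (half filling). Let D = |{i : n i = 2}| be the number of doubly occupied sites. Then the nearest-neighbor sum satisfies Σ_{i ∈ ZMod L} (n i)·(n (i+1)) ≥ L − 2·D. -/
/-- At half filling on a ring of `L` sites with occupations at most 2, the
nearest-neighbor sum `Σᵢ nᵢ·n_{i+1}` is at least `L - 2·D`, where `D` is the number of
doubly occupied sites. -/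
theorem nearest_neighbor_sum_ge (L : ℕ) [NeZero L]
    (n : ZMod L → ℕ) (hmax : ∀ i, n i ≤ 2)
    (hfill : ∑ i : ZMod L, n i = L) :
    (L : ℤ) - 2 * (Finset.univ.filter (fun i : ZMod L => n i = 2)).card
      ≤ (∑ i : ZMod L, n i * n (i + 1) : ℕ) := by
  set f : ℕ → ℤ := fun k => 2 * k - 2 * (if k = 2 then 1 else 0) - 1 with hf
  have key : ∀ a b : ℕ, a ≤ 2 → b ≤ 2 → f a + f b ≤ 2 * ((a : ℤ) * b) := by
    intro a b ha hb
    interval_cases a <;> interval_cases b <;> norm_num [hf]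
  have shift : ∑ i : ZMod L, f (n (i + 1)) = ∑ i : ZMod L, f (n i) :=
    Fintype.sum_equiv (Equiv.addRight (1 : ZMod L)) _ _ (fun i => rfl)
  have h1 : ∑ i : ZMod L, (f (n i) + f (n (i + 1)))
      ≤ ∑ i : ZMod L, 2 * ((n i : ℤ) * n (i + 1)) :=
    Finset.sum_le_sum (fun i _ => key _ _ (hmax i) (hmax (i + 1)))
  have hsumf : ∑ i : ZMod L, f (n i)
      = (L : ℤ) - 2 * (Finset.univ.filter (fun i : ZMod L => n i = 2)).card := by
    have hb : ∑ i : ZMod L, (if n i = 2 then (1 : ℤ) else 0)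
        = (Finset.univ.filter (fun i : ZMod L => n i = 2)).card := by
      simp [Finset.sum_boole]
    have hcard : (Finset.univ (α := ZMod L)).card = L := by
      rw [Finset.card_univ, ZMod.card]
    have hN : ∑ i : ZMod L, ((n i : ℤ)) = (L : ℤ) := by
      exact_mod_cast congrArg (Nat.cast : ℕ → ℤ) hfill
    simp only [hf, Finset.sum_sub_distrib, ← Finset.mul_sum, hb, hN,
      Finset.sum_const, nsmul_eq_mul, mul_one, hcard, ZMod.card]
    ring
  have h2 : ∑ i : ZMod L, (f (n i) + f (n (i + 1)))
      = 2 * ((L : ℤ) - 2 * (Finset.univ.filter (fun i : ZMod L => n i = 2)).card) := by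
    rw [Finset.sum_add_distrib, shift, hsumf]; ring
  have h3 : ∑ i : ZMod L, 2 * ((n i : ℤ) * n (i + 1))
      = 2 * ((∑ i : ZMod L, n i * n (i + 1) : ℕ) : ℤ) := by
    rw [← Finset.mul_sum]
    push_cast
    ring
  rw [h2, h3] at h1
  linarith
end

section
/- Let L ≥ 1, let U, V be nonnegative real numbers, and let n : ZMod L → ℕ satisfy n i ≤ 2 for every i and Σ_{i ∈ ZMod L} n i = L (half filling). Define the energy E(n) = U·|{i : n i = 2}| + V·Σ_{i ∈ ZMod L} (n i)·(n (i+1)). Then E(n) ≥ min(U·L/2, V·L). -/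
/-- Extended Hubbard model at `t = 0` on a ring of `L` sites at half filling: the energy
`E(n) = U·D + V·Σᵢ nᵢ·n_{i+1}` of every configuration is at least `min(U·L/2, V·L)`. -/
theorem hubbard_t0_energy_lower_bound (L : ℕ) [NeZero L]
    (U V : ℝ) (hU : 0 ≤ U) (hV : 0 ≤ V)
    (n : ZMod L → ℕ) (hmax : ∀ i, n i ≤ 2)
    (hfill : ∑ i : ZMod L, n i = L) :
    min (U * L / 2) (V * L)
      ≤ U * (Finset.univ.filter (fun i : ZMod L => n i = 2)).card
          + V * ∑ i : ZMod L, ((n i : ℝ) * (n (i + 1) : ℝ)) := by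
  classical
  set D : ℕ := (Finset.univ.filter (fun i : ZMod L => n i = 2)).card with hDdef
  set Z : ℕ := (Finset.univ.filter (fun i : ZMod L => n i = 0)).card with hZdef
  set S : ℝ := ∑ i : ZMod L, ((n i : ℝ) * (n (i + 1) : ℝ)) with hSdef
  have hcard : Fintype.card (ZMod L) = L := ZMod.card L
  have hsum : ∑ i : ZMod L, (n i : ℝ) = L := by exact_mod_cast congrArg (Nat.cast (R := ℝ)) hfill
  -- D = Z
  have hZD : (Z : ℝ) = D := by
    have h1 : ∑ i : ZMod L, ((if n i = 2 then (1:ℝ) else 0) - (if n i = 0 then (1:ℝ) else 0))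
        = ∑ i : ZMod L, ((n i : ℝ) - 1) := by
      refine Finset.sum_congr rfl fun i _ => ?_
      have h := hmax i
      interval_cases h : n i <;> norm_num
    rw [Finset.sum_sub_distrib, Finset.sum_sub_distrib, Finset.sum_boole, Finset.sum_boole,
      hsum] at h1
    simp only [Finset.sum_const, Finset.card_univ, hcard, nsmul_eq_mul, mul_one] at h1
    linarith
  -- S ≥ L - 2Z
  have hshift : ∑ i : ZMod L, (if n (i + 1) = 0 then (1:ℝ) else 0)
      = ∑ i : ZMod L, (if n i = 0 then (1:ℝ) else 0) :=
    Fintype.sum_equiv (Equiv.addRight (1 : ZMod L)) _ _ (fun i => rfl)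
  have hS1 : (L : ℝ) - 2 * Z ≤ S := by
    have hp : ∀ i : ZMod L, (n i : ℝ) - 2 * (if n (i + 1) = 0 then (1:ℝ) else 0)
        ≤ (n i : ℝ) * (n (i + 1) : ℝ) := by
      intro i
      by_cases h : n (i + 1) = 0
      · have : (0:ℝ) ≤ (n i : ℝ) := by positivity
        have h2 : (n i : ℝ) ≤ 2 := by exact_mod_cast hmax i
        simp only [h, Nat.cast_zero, mul_zero, if_pos]
        linarith
      · have h1 : (1:ℝ) ≤ (n (i + 1) : ℝ) := by
          exact_mod_cast Nat.one_le_iff_ne_zero.mpr h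
        have h0 : (0:ℝ) ≤ (n i : ℝ) := by positivity
        simp only [h, if_neg, if_false]
        nlinarith
    calc (L : ℝ) - 2 * Z
        = ∑ i : ZMod L, ((n i : ℝ) - 2 * (if n (i + 1) = 0 then (1:ℝ) else 0)) := by
          rw [Finset.sum_sub_distrib, hsum, ← Finset.mul_sum, hshift, Finset.sum_boole]
      _ ≤ S := Finset.sum_le_sum fun i _ => hp i
  have hS0 : (0:ℝ) ≤ S := by
    apply Finset.sum_nonneg
    intro i _
    positivity
  have hD0 : (0:ℝ) ≤ (D : ℝ) := Nat.cast_nonneg D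
  have hL0 : (0:ℝ) ≤ (L : ℝ) := Nat.cast_nonneg L
  rw [hZD] at hS1
  rcases le_total ((L : ℝ)) (2 * D) with hcase | hcase
  · refine le_trans (min_le_left _ _) ?_
    nlinarith
  · rcases le_total U (2 * V) with hc | hc
    · refine le_trans (min_le_left _ _) ?_
      nlinarith
    · refine le_trans (min_le_right _ _) ?_
      nlinarith
end

section
/- Let L be an even natural number with L ≥ 2, and let U, V be nonnegative real numbers with U ≤ 2V. Then the minimum over all configurations n : ZMod L → ℕ with n i ≤ 2 and Σ_{i ∈ ZMod L} n i = L of the energy E(n) = U·|{i : n i = 2}| + V·Σ_{i ∈ ZMod L} (n i)·(n (i+1)) equals U·L/2, and it is attained (e.g., by the charge-density-wave configuration that alternates doubly occupied and empty sites). -/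
lemma sum_zmod_val (L : ℕ) [NeZero L] (f : ℕ → ℕ) :
    ∑ i : ZMod L, f i.val = ∑ k ∈ Finset.range L, f k := by
  refine Finset.sum_nbij' (fun i => i.val) (fun k => (k : ZMod L)) ?_ ?_ ?_ ?_ ?_
  · intro a _; exact Finset.mem_range.mpr a.val_lt
  · intro a _; exact Finset.mem_univ _
  · intro a _; simp [ZMod.natCast_val, ZMod.cast_id]
  · intro k hk; exact ZMod.val_cast_of_lt (Finset.mem_range.mp hk)
  · intro a _; rfl

lemma sum_alt (m : ℕ) (a b : ℕ) :
    ∑ k ∈ Finset.range (2 * m), (if k % 2 = 0 then a else b) = m * (a + b) := by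
  induction m with
  | zero => simp
  | succ m ih =>
      have : 2 * (m + 1) = (2 * m + 1) + 1 := by ring
      rw [this, Finset.sum_range_succ, Finset.sum_range_succ, ih]
      have h1 : (2 * m) % 2 = 0 := by omega
      have h2 : (2 * m + 1) % 2 = 1 := by omega
      rw [if_pos h1, if_neg (by omega)]
      ring

/-- U-dominated branch of the extended Hubbard model at `t = 0`: for an even ring of
`L ≥ 2` sites and `U ≤ 2V` (with `U, V ≥ 0`), the minimum of the energy
`E(n) = U·D + V·Σᵢ nᵢ·n_{i+1}` over all half-filling configurations equals `U·L/2`,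
and it is attained. -/
theorem hubbard_t0_ground_energy_U_branch (L : ℕ) (hL2 : 2 ≤ L) (hLeven : Even L)
    [NeZero L] (U V : ℝ) (hU : 0 ≤ U) (hV : 0 ≤ V) (hUV : U ≤ 2 * V) :
    IsLeast {x : ℝ | ∃ n : ZMod L → ℕ, (∀ i, n i ≤ 2) ∧ (∑ i : ZMod L, n i = L) ∧
        x = U * (Finset.univ.filter (fun i : ZMod L => n i = 2)).card
              + V * ∑ i : ZMod L, ((n i : ℝ) * (n (i + 1) : ℝ))}
      (U * L / 2) := by
  obtain ⟨m, hm⟩ := hLeven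
  have hLm : L = 2 * m := by omega
  have hcard : Fintype.card (ZMod L) = L := ZMod.card L
  constructor
  · -- membership: CDW configuration
    refine ⟨fun i => if i.val % 2 = 0 then 2 else 0, fun i => by dsimp; split <;> omega, ?_, ?_⟩
    · exact (sum_zmod_val L (fun k => if k % 2 = 0 then 2 else 0)).trans
        (by rw [hLm, sum_alt m 2 0]; omega)
    · -- energy computation
      have hflip : ∀ i : ZMod L, (i + 1).val % 2 = (i.val + 1) % 2 := by
        intro i
        have h1 : ((1 : ZMod L)).val = 1 := by
          rw [ZMod.val_one_eq_one_mod]; exact Nat.mod_eq_of_lt (by omega)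
        have : (i + 1).val = (i.val + 1) % L := by
          rw [ZMod.val_add, h1]
        rw [this, Nat.mod_mod_of_dvd _ ⟨m, hLm⟩]
      have hprod : ∀ i : ZMod L,
          (((if i.val % 2 = 0 then 2 else 0 : ℕ) : ℝ) *
           ((if (i + 1).val % 2 = 0 then 2 else 0 : ℕ) : ℝ)) = 0 := by
        intro i
        rcases Nat.even_or_odd i.val with h | h
        · have h' := Nat.even_iff.mp h
          have hne : (i + 1).val % 2 = 1 := by rw [hflip]; omega
          rw [if_neg (show ¬((i + 1).val % 2 = 0) by omega)]; simp
        · have h' := Nat.odd_iff.mp h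
          rw [if_neg (by omega)]; simp
      rw [Finset.sum_congr rfl (fun i _ => hprod i), Finset.sum_const, smul_zero, mul_zero,
        add_zero]
      have hc : (Finset.univ.filter
          (fun i : ZMod L => (if i.val % 2 = 0 then 2 else 0 : ℕ) = 2)).card = m := by
        calc (Finset.univ.filter
            (fun i : ZMod L => (if i.val % 2 = 0 then 2 else 0 : ℕ) = 2)).card
            = ∑ i : ZMod L, (fun k => if k % 2 = 0 then 1 else 0) i.val := by
              rw [Finset.card_filter]
              refine Finset.sum_congr rfl fun i _ => ?_
              by_cases h : i.val % 2 = 0 <;> simp [h]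
          _ = ∑ k ∈ Finset.range L, (if k % 2 = 0 then 1 else 0) :=
              sum_zmod_val L (fun k => if k % 2 = 0 then 1 else 0)
          _ = m := by rw [hLm, sum_alt m 1 0]; omega
      rw [hc, hLm]
      push_cast
      ring
  · -- lower bound
    rintro x ⟨n, h2, hsum, rfl⟩
    classical
    set F0 := Finset.univ.filter (fun i : ZMod L => n i = 0) with hF0
    set F1 := Finset.univ.filter (fun i : ZMod L => n i = 1) with hF1
    set F2 := Finset.univ.filter (fun i : ZMod L => n i = 2) with hF2
    set A := Finset.univ.filter (fun i : ZMod L => 1 ≤ n i ∧ 1 ≤ n (i + 1)) with hA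
    set B := Finset.univ.filter (fun i : ZMod L => 1 ≤ n i ∧ n (i + 1) = 0) with hB
    set N := Finset.univ.filter (fun i : ZMod L => 1 ≤ n i) with hN
    have hcards : F0.card + F1.card + F2.card = L := by
      rw [hF0, hF1, hF2, Finset.card_filter, Finset.card_filter, Finset.card_filter,
        ← Finset.sum_add_distrib, ← Finset.sum_add_distrib]
      rw [Finset.sum_congr rfl (fun i _ => show _ = 1 by have := h2 i; split_ifs <;> omega)]
      simp [hcard]
    have hsum' : F1.card + 2 * F2.card = L := by
      have key : F1.card + 2 * F2.card = ∑ i : ZMod L, n i := by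
        rw [hF1, hF2, Finset.card_filter, Finset.card_filter, Finset.mul_sum,
          ← Finset.sum_add_distrib]
        refine Finset.sum_congr rfl fun i _ => ?_
        have := h2 i; split_ifs <;> omega
      rw [key, hsum]
    have hAB : A.card + B.card = N.card := by
      rw [hA, hB, hN, Finset.card_filter, Finset.card_filter, Finset.card_filter,
        ← Finset.sum_add_distrib]
      refine Finset.sum_congr rfl fun i _ => ?_
      split_ifs <;> omega
    have hNcard : N.card = F1.card + F2.card := by
      rw [hN, hF1, hF2, Finset.card_filter, Finset.card_filter, Finset.card_filter,
        ← Finset.sum_add_distrib]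
      refine Finset.sum_congr rfl fun i _ => ?_
      have := h2 i; split_ifs <;> omega
    have hBle : B.card ≤ F0.card := by
      refine Finset.card_le_card_of_injOn (fun i => i + 1) ?_ ?_
      · intro i hi
        rw [Finset.mem_coe, hB, Finset.mem_filter] at hi
        rw [Finset.mem_coe, hF0, Finset.mem_filter]
        exact ⟨Finset.mem_univ _, hi.2.2⟩
      · intro a _ b _ hab
        exact add_right_cancel hab
    have hAge : F1.card ≤ A.card := by omega
    -- product sum bound
    have hPnat : A.card ≤ ∑ i : ZMod L, n i * n (i + 1) := by
      calc A.card = ∑ i ∈ A, 1 := by simp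
        _ ≤ ∑ i ∈ A, n i * n (i + 1) := by
            refine Finset.sum_le_sum fun i hi => ?_
            rw [hA, Finset.mem_filter] at hi
            exact Nat.one_le_iff_ne_zero.mpr (Nat.mul_ne_zero (by omega) (by omega))
        _ ≤ ∑ i : ZMod L, n i * n (i + 1) :=
            Finset.sum_le_sum_of_subset (Finset.subset_univ A)
    have hPR : ((F1.card : ℝ)) ≤ ∑ i : ZMod L, ((n i : ℝ) * (n (i + 1) : ℝ)) := by
      have : ((F1.card : ℝ)) ≤ ((∑ i : ZMod L, n i * n (i + 1) : ℕ) : ℝ) := by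
        exact_mod_cast le_trans hAge hPnat
      calc ((F1.card : ℝ)) ≤ ((∑ i : ZMod L, n i * n (i + 1) : ℕ) : ℝ) := this
        _ = ∑ i : ZMod L, ((n i : ℝ) * (n (i + 1) : ℝ)) := by push_cast; rfl
    have hLR : (L : ℝ) = 2 * F2.card + F1.card := by exact_mod_cast (by omega : L = 2 * F2.card + F1.card)
    rw [hLR]
    nlinarith [mul_le_mul_of_nonneg_left hPR hV, mul_nonneg hU (Nat.cast_nonneg F1.card)]
end

section
/- Let L ≥ 1 be a natural number, and let U, V be nonnegative real numbers with U ≥ 2V. Then the minimum over all configurations n : ZMod L → ℕ with n i ≤ 2 and Σ_{i ∈ ZMod L} n i = L of the energy E(n) = U·|{i : n i = 2}| + V·Σ_{i ∈ ZMod L} (n i)·(n (i+1)) equals V·L, and it is attained by the spin-density-wave configuration n i = 1 for all i. -/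
open Finset

lemma hubbard_pointwise_aux (a b : ℕ) (ha : a ≤ 2) (hb : b ≤ 2) :
    (a : ℤ) + b - a * b - 1 ≤
      (if a = 2 ∧ b = 0 then 1 else 0) + (if a = 0 ∧ b = 2 then 1 else 0) := by
  interval_cases a <;> interval_cases b <;> decide

/-- V-dominated branch of the extended Hubbard model at `t = 0`: for a ring of `L ≥ 1`
sites and `U ≥ 2V` (with `U, V ≥ 0`), the minimum of the energy
`E(n) = U·D + V·Σᵢ nᵢ·n_{i+1}` over all half-filling configurations equals `V·L`, and
it is attained by the spin-density-wave configuration `n i = 1` for all `i`. -/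
theorem hubbard_t0_ground_energy_V_branch (L : ℕ) [NeZero L]
    (U V : ℝ) (hU : 0 ≤ U) (hV : 0 ≤ V) (hUV : 2 * V ≤ U) :
    IsLeast {x : ℝ | ∃ n : ZMod L → ℕ, (∀ i, n i ≤ 2) ∧ (∑ i : ZMod L, n i = L) ∧
        x = U * (Finset.univ.filter (fun i : ZMod L => n i = 2)).card
              + V * ∑ i : ZMod L, ((n i : ℝ) * (n (i + 1) : ℝ))}
      (V * L) ∧
    (∀ n : ZMod L → ℕ, (∀ i, n i = 1) →
      U * (Finset.univ.filter (fun i : ZMod L => n i = 2)).card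
          + V * ∑ i : ZMod L, ((n i : ℝ) * (n (i + 1) : ℝ)) = V * L) := by
  have hattain : ∀ n : ZMod L → ℕ, (∀ i, n i = 1) →
      U * (Finset.univ.filter (fun i : ZMod L => n i = 2)).card
          + V * ∑ i : ZMod L, ((n i : ℝ) * (n (i + 1) : ℝ)) = V * L := by
    intro n h1
    simp [h1, Finset.card_univ, ZMod.card]
  refine ⟨⟨⟨fun _ => 1, fun i => by norm_num, by simp [Finset.card_univ, ZMod.card],
      (hattain (fun _ => 1) (fun _ => rfl)).symm⟩, ?_⟩, hattain⟩
  rintro x ⟨n, h2, hsum, rfl⟩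
  set d := (Finset.univ.filter (fun i : ZMod L => n i = 2)).card with hd
  -- key integer inequality : L ≤ 2*d + Σ n i * n (i+1)
  have hshift : ∑ i : ZMod L, (n (i + 1) : ℤ) = ∑ i : ZMod L, (n i : ℤ) :=
    Equiv.sum_comp (Equiv.addRight (1 : ZMod L)) (fun i => (n i : ℤ))
  have hsum' : ∑ i : ZMod L, (n i : ℤ) = L := by exact_mod_cast hsum
  have hA : (Finset.univ.filter (fun i : ZMod L => n i = 2 ∧ n (i + 1) = 0)).card ≤ d := by
    apply Finset.card_le_card
    intro i hi
    simp only [Finset.mem_filter, Finset.mem_univ, true_and] at hi ⊢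
    exact hi.1
  have hB : (Finset.univ.filter (fun i : ZMod L => n i = 0 ∧ n (i + 1) = 2)).card ≤ d := by
    apply Finset.card_le_card_of_injOn (fun i => i + 1)
    · intro i hi
      simp only [Finset.coe_filter, Finset.mem_coe, Finset.mem_filter, Finset.mem_univ, true_and, Set.mem_setOf_eq] at hi ⊢
      exact hi.2
    · intro a _ b _ h
      simpa using h
  have hmain : (∑ i : ZMod L, ((n i : ℤ) + n (i + 1) - n i * n (i + 1) - 1)) ≤ 2 * d := by
    calc (∑ i : ZMod L, ((n i : ℤ) + n (i + 1) - n i * n (i + 1) - 1))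
        ≤ ∑ i : ZMod L, ((if n i = 2 ∧ n (i + 1) = 0 then (1 : ℤ) else 0) +
            (if n i = 0 ∧ n (i + 1) = 2 then 1 else 0)) :=
          Finset.sum_le_sum fun i _ => hubbard_pointwise_aux _ _ (h2 i) (h2 (i + 1))
      _ = ((Finset.univ.filter (fun i : ZMod L => n i = 2 ∧ n (i + 1) = 0)).card : ℤ) +
            (Finset.univ.filter (fun i : ZMod L => n i = 0 ∧ n (i + 1) = 2)).card := by
          rw [Finset.sum_add_distrib, Finset.sum_boole, Finset.sum_boole]
      _ ≤ (d : ℤ) + d := by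
          exact_mod_cast add_le_add hA hB
      _ = 2 * d := by ring
  have hexp : (∑ i : ZMod L, ((n i : ℤ) + n (i + 1) - n i * n (i + 1) - 1))
      = (∑ i : ZMod L, (n i : ℤ)) + (∑ i : ZMod L, (n (i + 1) : ℤ))
        - (∑ i : ZMod L, (n i : ℤ) * (n (i + 1) : ℤ)) - L := by
    simp [Finset.sum_add_distrib, Finset.sum_sub_distrib, Finset.card_univ, ZMod.card]
  have hP : (L : ℤ) ≤ 2 * d + ∑ i : ZMod L, (n i : ℤ) * (n (i + 1) : ℤ) := by
    rw [hexp, hshift, hsum'] at hmain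
    linarith
  have hPR : (L : ℝ) ≤ 2 * d + ∑ i : ZMod L, (n i : ℝ) * (n (i + 1) : ℝ) := by
    exact_mod_cast hP
  have hdnn : (0 : ℝ) ≤ d := Nat.cast_nonneg _
  nlinarith [mul_le_mul_of_nonneg_left hPR hV, mul_nonneg (sub_nonneg.2 hUV) hdnn]
end
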